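/- Let q ≥ 1, let a ∈ ℝ with a ≠ 0, let α ∈ ℕ^q, and let n ≥ 1. The monomial q-fps a·X^α has an n-th root in MvPowerSeries (Fin q) ℝ if and only if n divides every component of α and there exists t ∈ ℝ with t^n = a. -/

import Mathlib

open MvPowerSeries Finsupp

private lemma lexOrder_monomial_aux {σ : Type*} [LinearOrder σ] [WellFoundedGT σ]
    (d : σ →₀ ℕ) (a : ℝ) (ha : a ≠ 0) :
    lexOrder (monomial d a) = toLex d := by
  classical
  apply le_antisymm
  · apply lexOrder_le_of_coeff_ne_zero (d := d)
    rw [coeff_monomial_same]; exact ha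
  · rw [le_lexOrder_iff]
    intro e he
    rw [coeff_monomial]
    rw [if_neg]
    intro h
    subst h
    exact lt_irrefl _ (by exact_mod_cast he)

private lemma pow_lex_aux {σ : Type*} [LinearOrder σ] [WellFoundedGT σ]
    (g : MvPowerSeries σ ℝ) (β : σ →₀ ℕ) (hg : g.lexOrder = toLex β) (k : ℕ) :
    lexOrder (g ^ k) = toLex (k • β) ∧
      MvPowerSeries.coeff (k • β) (g ^ k) = (MvPowerSeries.coeff β g) ^ k := by
  induction k with
  | zero =>
      constructor
      · rw [pow_zero, zero_smul]
        rw [← monomial_zero_one (R := ℝ) (σ := σ), lexOrder_monomial_aux _ _ one_ne_zero]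
      · simp [coeff_zero_one]
  | succ k ih =>
      have hpow : lexOrder (g ^ k) = toLex (k • β) := ih.1
      have hadd : (k + 1) • β = k • β + β := by rw [add_smul, one_smul]
      constructor
      · rw [pow_succ, lexOrder_mul, hpow, hg, hadd]
        rw [← WithTop.coe_add, toLex_add]
      · rw [pow_succ, hadd, coeff_mul_of_add_lexOrder hpow hg, ih.2, pow_succ]

/-- The monomial `a · X^α` (with `a ≠ 0`) has an `n`-th root in
`MvPowerSeries (Fin q) ℝ` if and only if `n` divides every component of `α`
and `a` has an `n`-th root in `ℝ`. -/
theorem monomial_exists_nthRoot_iff {q n : ℕ} (hq : 1 ≤ q) (hn : 1 ≤ n)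
    (a : ℝ) (ha : a ≠ 0) (α : Fin q →₀ ℕ) :
    (∃ g : MvPowerSeries (Fin q) ℝ, g ^ n = MvPowerSeries.monomial α a) ↔
      ((∀ i : Fin q, n ∣ α i) ∧ ∃ t : ℝ, t ^ n = a) := by
  constructor
  · rintro ⟨g, hgn⟩
    have hg0 : g ≠ 0 := by
      intro h
      apply ha
      have : (0 : MvPowerSeries (Fin q) ℝ) = monomial α a := by
        rw [← hgn, h, zero_pow (by omega)]
      have := congrArg (MvPowerSeries.coeff α) this
      rwa [coeff_monomial_same, map_zero, eq_comm] at this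
    obtain ⟨β, hβ⟩ := exists_finsupp_eq_lexOrder_of_ne_zero hg0
    obtain ⟨hlex, hcoeff⟩ := pow_lex_aux g β hβ n
    have hα : n • β = α := by
      have : lexOrder (g ^ n) = toLex α := by
        rw [hgn, lexOrder_monomial_aux _ _ ha]
      rw [hlex] at this
      have := WithTop.coe_injective this
      exact toLex.injective this
    constructor
    · intro i
      exact ⟨β i, by rw [← hα]; simp [mul_comm]⟩
    · refine ⟨MvPowerSeries.coeff β g, ?_⟩
      rw [← hcoeff, hα, hgn, coeff_monomial_same]
  · rintro ⟨hdvd, t, ht⟩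
    set β : Fin q →₀ ℕ := α.mapRange (· / n) (Nat.zero_div n) with hβdef
    have hβ : n • β = α := by
      ext i
      simp only [Finsupp.smul_apply, hβdef, Finsupp.mapRange_apply, smul_eq_mul]
      exact Nat.mul_div_cancel' (hdvd i)
    refine ⟨monomial β t, ?_⟩
    have : ∀ k : ℕ, (monomial β t) ^ k = monomial (k • β) (t ^ k) := by
      intro k
      induction k with
      | zero =>
          rw [pow_zero, zero_smul, pow_zero, monomial_zero_one]
      | succ k ih =>
          rw [pow_succ, ih, monomial_mul_monomial, add_smul, one_smul, pow_succ]
    rw [this n, hβ, ht]
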